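/- Let F ⊣ G be an adjunction with F : B ⥤ C and unit η : 𝟭_B ⟶ F ⋙ G, and suppose the category B is idempotent complete. If η admits a natural retraction, i.e., there exists a natural transformation σ : F ⋙ G ⟶ 𝟭_B with η ≫ σ equal to the identity natural transformation of 𝟭_B, then the comparison functor Φ : B ⥤ Coalg(T) to the Eilenberg–Moore category of coalgebras over the induced comonad T on C is an equivalence of categories. -/

import Mathlib

open CategoryTheory

universe v₁ v₂ u₁ u₂

/-- If `B` is idempotent complete and the unit of an adjunction `F ⊣ G` admits a natural
retraction, then the comparison functor to the Eilenberg–Moore category of coalgebras over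
the induced comonad is an equivalence. -/
theorem comparison_isEquivalence_of_unit_split
    {B : Type u₁} [Category.{v₁} B] {C : Type u₂} [Category.{v₂} C]
    [IsIdempotentComplete B]
    (F : B ⥤ C) (G : C ⥤ B) (adj : F ⊣ G)
    (σ : F ⋙ G ⟶ 𝟭 B) (hσ : adj.unit ≫ σ = 𝟙 (𝟭 B)) :
    (Comonad.comparison adj).IsEquivalence := by
  have hσ' : ∀ X : B, adj.unit.app X ≫ σ.app X = 𝟙 X := fun X => congrArg (·.app X) hσ
  -- faithful
  have hfaithful : (Comonad.comparison adj).Faithful := by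
    constructor
    intro H H' f g w
    have w' : F.map f = F.map g := congrArg Comonad.Coalgebra.Hom.f w
    have n : ∀ u : H ⟶ H',
        (adj.unit.app H ≫ G.map (F.map u)) ≫ σ.app H' = u := by
      intro u
      have n0 := adj.unit.naturality u
      dsimp at n0
      rw [← n0, Category.assoc, hσ' H', Category.comp_id]
    rw [← n f, ← n g, w']
  -- full
  have hfull : (Comonad.comparison adj).Full := by
    constructor
    intro H H' k
    refine ⟨adj.unit.app H ≫ G.map k.f ≫ σ.app H', ?_⟩
    ext
    have key : ∀ f : F.obj H ⟶ F.obj H',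
        F.map (adj.unit.app H) ≫ F.map (G.map f) = f ≫ F.map (adj.unit.app H') →
        F.map (adj.unit.app H ≫ G.map f ≫ σ.app H') = f := by
      intro f hk
      rw [F.map_comp, F.map_comp, ← Category.assoc, hk, Category.assoc, ← F.map_comp,
        hσ' H', F.map_id, Category.comp_id]
    exact key k.f k.h
  -- essentially surjective
  have hess : (Comonad.comparison adj).EssSurj := by
    constructor
    intro X
    set a : X.A ⟶ F.obj (G.obj X.A) := X.a with ha
    set e : G.obj X.A ⟶ G.obj X.A := G.map a ≫ σ.app (G.obj X.A) with he
    have hcoassoc : a ≫ F.map (adj.unit.app (G.obj X.A)) = a ≫ F.map (G.map a) :=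
      X.coassoc
    have key : G.map a ≫ σ.app (G.obj X.A) ≫ G.map a
        = G.map a ≫ σ.app (G.obj X.A) ≫ adj.unit.app (G.obj X.A) := by
      have n1 := σ.naturality (G.map a)
      dsimp at n1
      have n2 := σ.naturality (adj.unit.app (G.obj X.A))
      dsimp at n2
      rw [← n1, ← Category.assoc, ← G.map_comp, ← hcoassoc, G.map_comp, Category.assoc, n2]
    have hidem : e ≫ e = e := by
      have k2 := reassoc_of% key
      simp only [he, Category.assoc, k2, hσ', Category.comp_id]
    obtain ⟨P, i, r, hir, hri⟩ := IsIdempotentComplete.idempotents_split (G.obj X.A) e hidem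
    have hie : i ≫ e = i := by rw [← hri, ← Category.assoc, hir, Category.id_comp]
    have h7 : e ≫ G.map a = e ≫ adj.unit.app (G.obj X.A) := by
      simp only [he, Category.assoc]; exact key
    have hiG : i ≫ G.map a = i ≫ adj.unit.app (G.obj X.A) := by
      have h8 : i ≫ G.map a = (i ≫ e) ≫ G.map a := by rw [hie]
      rw [h8, Category.assoc, h7, ← Category.assoc, hie]
    set u : F.obj P ⟶ X.A := F.map i ≫ adj.counit.app X.A with hu
    set v : X.A ⟶ F.obj P := a ≫ F.map r with hv
    have hFi : F.map (adj.unit.app P) ≫ F.map (G.map u) = F.map i := by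
      rw [hu, ← F.map_comp, G.map_comp, ← Category.assoc]
      have n0 := adj.unit.naturality i
      dsimp at n0
      rw [← n0, Category.assoc, adj.right_triangle_components X.A, Category.comp_id]
    have hua : u ≫ a = F.map i := by
      rw [hu, Category.assoc]
      have n3 := adj.counit.naturality a
      dsimp at n3
      rw [← n3, ← Category.assoc, ← F.map_comp, hiG, F.map_comp, Category.assoc,
        adj.left_triangle_components (G.obj X.A), Category.comp_id]
    have hvu : v ≫ u = 𝟙 X.A := by
      have h9 : a ≫ F.map e ≫ adj.counit.app X.A = 𝟙 X.A := by
        simp only [he, F.map_comp, ← Category.assoc]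
        rw [← hcoassoc]
        simp only [Category.assoc]
        rw [← Functor.map_comp_assoc, hσ' (G.obj X.A)]
        rw [F.map_id, Category.id_comp]; exact X.counit
      rw [hv, hu, Category.assoc, ← Category.assoc (F.map r), ← F.map_comp, hri]
      exact h9
    have huv : u ≫ v = 𝟙 (F.obj P) := by
      rw [hv, ← Category.assoc, hua, ← F.map_comp, hir, F.map_id]
    refine ⟨P, ⟨Comonad.Coalgebra.isoMk ⟨u, v, huv, hvu⟩ ?_⟩⟩
    exact hFi.trans hua.symm
  exact { faithful := hfaithful, full := hfull, essSurj := hess }
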